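/- arXiv:1611.03943 — 2 statements merged into one kernel-verified Lean document; each statement's English description precedes it below -/
import Mathlib

section
/- Let G = Z_2^n (n ≥ 3) with β(e_i,e_j) = −1 for i≠j and 1 for i=j. Then R^− = {e_i + e_j : 1 ≤ i < j ≤ n} is a skew root system of Lie type in (G_1, β|_{G_1}), where G_1 ≅ Z_2^{n−1} is the subgroup generated by R^−. Moreover β(e_i+e_j, e_s+e_t) = −1 if and only if |{i,j} ∩ {s,t}| = 1, the graph of R^− is connected (so R^− is indecomposable), and the Lie algebra L(R^−) is isomorphic to so_n(F). -/
attribute [local instance 100] LieRing.ofAssociativeRing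

open Matrix

lemma neg_one_ne_one' {F : Type*} [Field F] [CharZero F] : (-1 : Fˣ) ≠ 1 := by
  intro h
  have h2 := congrArg (Units.val) h
  simp only [Units.val_neg, Units.val_one] at h2
  have : (2 : F) = 0 := by linear_combination -h2
  exact two_ne_zero this

lemma pow_neg_one_parity {F : Type*} [Field F] {x y : ℕ} (h : x % 2 = y % 2) :
    ((-1 : Fˣ))^x = (-1)^y := by
  rcases Nat.even_or_odd x with he | ho
  · have hy : Even y := by rw [Nat.even_iff] at *; omega
    rw [he.neg_one_pow, hy.neg_one_pow]
  · have hy : Odd y := by rw [Nat.odd_iff] at *; omega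
    rw [ho.neg_one_pow, hy.neg_one_pow]

lemma lie_std_mid {F : Type*} [Field F] {n : ℕ} (a b c : Fin n)
    (hab : a ≠ b) (hbc : b ≠ c) (hac : a ≠ c) :
    ⁅(Matrix.single a b (1:F) - Matrix.single b a 1 : Matrix (Fin n) (Fin n) F),
      Matrix.single b c (1:F) - Matrix.single c b 1⁆ =
      Matrix.single a c 1 - Matrix.single c a 1 := by
  simp only [Ring.lie_def, sub_mul, mul_sub, Matrix.single_mul_single_same,
    Matrix.single_mul_single_of_ne _ _ _ _ hbc.symm, Matrix.single_mul_single_of_ne _ _ _ _ hab,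
    Matrix.single_mul_single_of_ne _ _ _ _ hac.symm, Matrix.single_mul_single_of_ne _ _ _ _ hac, Matrix.single_mul_single_of_ne _ _ _ _ hbc,
    Matrix.single_mul_single_of_ne _ _ _ _ hab.symm, one_mul]
  abel

lemma lie_std_disj {F : Type*} [Field F] {n : ℕ} (a b c d : Fin n)
    (hac : a ≠ c) (had : a ≠ d) (hbc : b ≠ c) (hbd : b ≠ d) :
    ⁅(Matrix.single a b (1:F) - Matrix.single b a 1 : Matrix (Fin n) (Fin n) F),
      Matrix.single c d (1:F) - Matrix.single d c 1⁆ = 0 := by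
  simp only [Ring.lie_def, sub_mul, mul_sub,
    Matrix.single_mul_single_of_ne _ _ _ _ hbc, Matrix.single_mul_single_of_ne _ _ _ _ hbd,
    Matrix.single_mul_single_of_ne _ _ _ _ hac, Matrix.single_mul_single_of_ne _ _ _ _ had,
    Matrix.single_mul_single_of_ne _ _ _ _ hbd.symm, Matrix.single_mul_single_of_ne _ _ _ _ had.symm,
    Matrix.single_mul_single_of_ne _ _ _ _ hbc.symm, Matrix.single_mul_single_of_ne _ _ _ _ hac.symm]
  abel

section
variable {n : ℕ}

def ebv {n : ℕ} (i : Fin n) : Fin n → ZMod 2 := Pi.single i 1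

lemma ebp_apply {i j : Fin n} (hij : i ≠ j) (k : Fin n) :
    (ebv i + ebv j) k = if k = i ∨ k = j then 1 else 0 := by
  rcases eq_or_ne k i with rfl | hki
  · simp [ebv, Pi.single_apply, hij.symm]
  · rcases eq_or_ne k j with rfl | hkj
    · simp [ebv, Pi.single_apply, hki]
    · simp [ebv, Pi.single_apply, hki, hkj]

lemma sum_ebv (i : Fin n) : (∑ k, ebv i k) = 1 := by
  simp only [ebv, Pi.single_apply]
  rw [Finset.sum_ite_eq' Finset.univ i]
  simp

lemma sum_ebp {i j : Fin n} (hij : i ≠ j) : (∑ k, (ebv i + ebv j) k) = 0 := by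
  simp only [Pi.add_apply, Finset.sum_add_distrib, sum_ebv]
  decide

lemma val_ebp {i j : Fin n} (hij : i ≠ j) (p : Fin n) :
    ((ebv i + ebv j) p).val = (if p = i then 1 else 0) + (if p = j then 1 else 0) := by
  rw [ebp_apply hij]
  rcases eq_or_ne p i with rfl | hpi
  · simp [hij, ZMod.val_one]
  · rcases eq_or_ne p j with rfl | hpj
    · simp [hpi, ZMod.val_one]
    · simp [hpi, hpj]

lemma dot_ebp {i j s t : Fin n} (hij : i ≠ j) (hst : s ≠ t) :
    (∑ k, ((ebv i + ebv j) k) * ((ebv s + ebv t) k)) =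
      ((({i, j} ∩ {s, t} : Finset (Fin n)).card : ZMod 2)) := by
  have h1 : ∀ k : Fin n, ((ebv i + ebv j) k) * ((ebv s + ebv t) k) =
      if k ∈ ({i, j} ∩ {s, t} : Finset (Fin n)) then 1 else 0 := by
    intro k
    rw [ebp_apply hij, ebp_apply hst]
    by_cases h1 : k = i ∨ k = j <;> by_cases h2 : k = s ∨ k = t <;>
      simp [h1, h2, Finset.mem_inter]
  rw [Finset.sum_congr rfl fun k _ => h1 k]
  rw [Finset.sum_ite_mem, Finset.univ_inter, Finset.sum_const, nsmul_eq_mul, mul_one]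

lemma card_inter_pair_le {i j s t : Fin n} :
    (({i, j} ∩ {s, t} : Finset (Fin n)).card) ≤ 2 := by
  calc (({i, j} ∩ {s, t} : Finset (Fin n)).card) ≤ ({i, j} : Finset (Fin n)).card :=
        Finset.card_le_card (Finset.inter_subset_left)
    _ ≤ 2 := Finset.card_insert_le _ _ |>.trans (by simp)

lemma xi_val {F : Type*} [Field F]
    (ξ : (Fin n → ZMod 2) → (Fin n → ZMod 2) → Fˣ)
    (hξ : ∀ a b, ξ a b =
      (-1 : Fˣ) ^ (∑ i : Fin n, ∑ j : Fin n, if j < i then (a i).val * (b j).val else 0))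
    {i j s t : Fin n} (hij : i ≠ j) (hst : s ≠ t) :
    ξ (ebv i + ebv j) (ebv s + ebv t) =
      (-1) ^ ((((if s < i then 1 else 0) + (if t < i then 1 else 0)) +
        ((if s < j then 1 else 0) + (if t < j then 1 else 0))) : ℕ) := by
  rw [hξ]
  congr 1
  have hinner : ∀ p : Fin n,
      (∑ q : Fin n, if q < p then (((ebv i + ebv j) p).val * ((ebv s + ebv t) q).val) else 0)
      = (((ebv i + ebv j) p).val) *
          ((if s < p then 1 else 0) + (if t < p then 1 else 0)) := by
    intro p
    have : ∀ q : Fin n,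
        (if q < p then (((ebv i + ebv j) p).val * ((ebv s + ebv t) q).val) else 0) =
        (((ebv i + ebv j) p).val) *
          ((if q = s then (if q < p then 1 else 0) else 0) +
           (if q = t then (if q < p then 1 else 0) else 0)) := by
      intro q
      rw [val_ebp hst]
      rcases eq_or_ne q s with rfl | hqs
      · simp only [hst, if_true, if_neg (Ne.symm hst) ]
        split <;> simp
      · rcases eq_or_ne q t with rfl | hqt
        · simp only [hqs, if_false, if_true]
          split <;> simp
        · simp [hqs, hqt]
    rw [Finset.sum_congr rfl fun q _ => this q, ← Finset.mul_sum]
    congr 1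
    rw [Finset.sum_add_distrib, Finset.sum_ite_eq' Finset.univ s, Finset.sum_ite_eq' Finset.univ t]
    simp
  rw [Finset.sum_congr rfl fun p _ => hinner p]
  have : ∀ p : Fin n,
      (((ebv i + ebv j) p).val) * ((if s < p then 1 else 0) + (if t < p then 1 else 0)) =
      (if p = i then ((if s < p then 1 else 0) + (if t < p then 1 else 0)) else 0) +
      (if p = j then ((if s < p then 1 else 0) + (if t < p then 1 else 0)) else 0) := by
    intro p
    rw [val_ebp hij]
    rcases eq_or_ne p i with rfl | hpi
    · simp [hij]
    · rcases eq_or_ne p j with rfl | hpj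
      · simp [hpi]
      · simp [hpi, hpj]
  rw [Finset.sum_congr rfl fun p _ => this p, Finset.sum_add_distrib,
    Finset.sum_ite_eq' Finset.univ i, Finset.sum_ite_eq' Finset.univ j]
  simp

end

section
variable {n : ℕ}

lemma zmod2_cases : ∀ x : ZMod 2, x = 0 ∨ x = 1 := by decide

lemma beta_val {F : Type*} [Field F]
    (β : (Fin n → ZMod 2) → (Fin n → ZMod 2) → Fˣ)
    (hβ : ∀ a b, β a b =
      (-1 : Fˣ) ^ (((∑ i, a i) * (∑ i, b i) - ∑ i, a i * b i : ZMod 2)).val)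
    {i j s t : Fin n} (hij : i ≠ j) (hst : s ≠ t) :
    β (ebv i + ebv j) (ebv s + ebv t) =
      (-1) ^ (({i, j} ∩ {s, t} : Finset (Fin n)).card) := by
  rw [hβ, sum_ebp hij, sum_ebp hst, dot_ebp hij hst]
  have h0 : ((0 : ZMod 2) * 0 - ((({i, j} ∩ {s, t} : Finset (Fin n)).card : ℕ) : ZMod 2)) =
      ((({i, j} ∩ {s, t} : Finset (Fin n)).card : ℕ) : ZMod 2) := by
    have : ∀ x : ZMod 2, 0 * 0 - x = x := by decide
    exact this _
  rw [h0, ZMod.val_natCast]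
  exact pow_neg_one_parity (by omega)

lemma beta_ne_one_iff {F : Type*} [Field F] [CharZero F]
    (β : (Fin n → ZMod 2) → (Fin n → ZMod 2) → Fˣ)
    (hβ : ∀ a b, β a b =
      (-1 : Fˣ) ^ (((∑ i, a i) * (∑ i, b i) - ∑ i, a i * b i : ZMod 2)).val)
    {i j s t : Fin n} (hij : i ≠ j) (hst : s ≠ t) :
    (β (ebv i + ebv j) (ebv s + ebv t) ≠ 1 ↔
      ({i, j} ∩ {s, t} : Finset (Fin n)).card = 1) := by
  rw [beta_val β hβ hij hst]
  have hle := card_inter_pair_le (i := i) (j := j) (s := s) (t := t)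
  interval_cases h : (({i, j} ∩ {s, t} : Finset (Fin n)).card)
  · simp
  · simpa using neg_one_ne_one' (F := F)
  · norm_num

lemma beta_eq_neg_one_iff {F : Type*} [Field F] [CharZero F]
    (β : (Fin n → ZMod 2) → (Fin n → ZMod 2) → Fˣ)
    (hβ : ∀ a b, β a b =
      (-1 : Fˣ) ^ (((∑ i, a i) * (∑ i, b i) - ∑ i, a i * b i : ZMod 2)).val)
    {i j s t : Fin n} (hij : i ≠ j) (hst : s ≠ t) :
    (β (ebv i + ebv j) (ebv s + ebv t) = -1 ↔
      ({i, j} ∩ {s, t} : Finset (Fin n)).card = 1) := by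
  rw [beta_val β hβ hij hst]
  have hle := card_inter_pair_le (i := i) (j := j) (s := s) (t := t)
  interval_cases h : (({i, j} ∩ {s, t} : Finset (Fin n)).card)
  · simpa using (neg_one_ne_one' (F := F)).symm
  · simp
  · rw [show ((-1 : Fˣ))^2 = 1 from by simp [pow_two]]
    simpa using (neg_one_ne_one' (F := F)).symm

lemma pair_eq {i j s t : Fin n} (hij : i < j) (hst : s < t)
    (h : ebv i + ebv j = ebv s + ebv t) : i = s ∧ j = t := by
  have key : ∀ k : Fin n, (k = i ∨ k = j) ↔ (k = s ∨ k = t) := by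
    intro k
    have hk := congrFun h k
    rw [ebp_apply hij.ne, ebp_apply hst.ne] at hk
    by_cases hP : (k = i ∨ k = j) <;> by_cases hQ : (k = s ∨ k = t) <;>
      simp only [hP, hQ, if_true, if_false] at hk ⊢
    · exact absurd hk (by decide)
    · exact absurd hk (by decide)
  have hij' : i.val < j.val := hij
  have hst' : s.val < t.val := hst
  have hi' : i.val = s.val ∨ i.val = t.val := by
    rcases (key i).mp (Or.inl rfl) with h | h
    · exact Or.inl (congrArg Fin.val h)
    · exact Or.inr (congrArg Fin.val h)
  have hj' : j.val = s.val ∨ j.val = t.val := by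
    rcases (key j).mp (Or.inr rfl) with h | h
    · exact Or.inl (congrArg Fin.val h)
    · exact Or.inr (congrArg Fin.val h)
  rcases hi' with h1 | h1 <;> rcases hj' with h2 | h2 <;>
    exact ⟨Fin.ext (by omega), Fin.ext (by omega)⟩

lemma inter_pair_one_left {i j s t : Fin n} (hi : i = s ∨ i = t)
    (hjs : j ≠ s) (hjt : j ≠ t) :
    ({i, j} ∩ {s, t} : Finset (Fin n)).card = 1 := by
  have hij : i ≠ j := by
    rcases hi with rfl | rfl
    · exact hjs.symm
    · exact hjt.symm
  have : ({i, j} ∩ {s, t} : Finset (Fin n)) = {i} := by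
    ext x
    simp only [Finset.mem_inter, Finset.mem_insert, Finset.mem_singleton]
    constructor
    · rintro ⟨rfl | rfl, h2⟩
      · rfl
      · rcases h2 with rfl | rfl
        · exact absurd rfl hjs
        · exact absurd rfl hjt
    · rintro rfl
      exact ⟨Or.inl rfl, hi⟩
  rw [this, Finset.card_singleton]

lemma inter_pair_one_right {i j s t : Fin n} (hj : j = s ∨ j = t)
    (his : i ≠ s) (hit : i ≠ t) :
    ({i, j} ∩ {s, t} : Finset (Fin n)).card = 1 := by
  have : ({i, j} ∩ {s, t} : Finset (Fin n)) = {j} := by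
    ext x
    simp only [Finset.mem_inter, Finset.mem_insert, Finset.mem_singleton]
    constructor
    · rintro ⟨rfl | rfl, h2⟩
      · rcases h2 with rfl | rfl
        · exact absurd rfl his
        · exact absurd rfl hit
      · rfl
    · rintro rfl
      exact ⟨Or.inr rfl, hj⟩
  rw [this, Finset.card_singleton]

end

section
variable {n : ℕ}

def sigmaHom (n : ℕ) : (Fin n → ZMod 2) →+ ZMod 2 where
  toFun := fun g => ∑ i, g i
  map_zero' := by simp
  map_add' := by intro a b; simp [Finset.sum_add_distrib]

lemma ebv_self_add (i : Fin n) : ebv i + ebv i = 0 := by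
  rw [ebv, ← Pi.single_add]
  have h : (1 + 1 : ZMod 2) = 0 := by decide
  rw [h, Pi.single_zero]

lemma mem_closure_pair (hn : 0 < n) (R : Set (Fin n → ZMod 2))
    (hRdef : R = {g | ∃ i j : Fin n, i < j ∧ g = ebv i + ebv j}) (k l : Fin n) :
    ebv k + ebv l ∈ AddSubgroup.closure R := by
  rcases lt_trichotomy k l with h | h | h
  · exact AddSubgroup.subset_closure (by rw [hRdef]; exact ⟨k, l, h, rfl⟩)
  · rw [h, ebv_self_add]; exact zero_mem _
  · rw [add_comm]
    exact AddSubgroup.subset_closure (by rw [hRdef]; exact ⟨l, k, h, rfl⟩)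

lemma closure_eq_ker (hn : 0 < n) (R : Set (Fin n → ZMod 2))
    (hRdef : R = {g | ∃ i j : Fin n, i < j ∧ g = ebv i + ebv j}) :
    AddSubgroup.closure R = (sigmaHom n).ker := by
  apply le_antisymm
  · rw [AddSubgroup.closure_le]
    intro g hg
    rw [hRdef] at hg
    obtain ⟨i, j, hij, rfl⟩ := hg
    exact sum_ebp hij.ne
  · intro g hg
    have hg' : (∑ i, g i) = 0 := hg
    set T : Finset (Fin n) := Finset.univ.filter (fun k => g k = 1) with hT
    have hdecomp : g = ∑ k ∈ T, ebv k := by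
      funext m
      rw [Finset.sum_apply]
      have : ∀ k ∈ T, ebv k m = if m = k then 1 else 0 := by
        intro k _; exact Pi.single_apply k 1 m
      rw [Finset.sum_congr rfl this, Finset.sum_ite_eq T m]
      rcases zmod2_cases (g m) with h | h
      · rw [h]; simp [hT, h]
      · rw [h]; simp [hT, h]
    have hsum : (∑ i, g i) = (T.card : ZMod 2) := by
      rw [← Finset.sum_filter_add_sum_filter_not Finset.univ (fun k => g k = 1)]
      have h2 : (∑ k ∈ Finset.univ.filter (fun k => ¬ g k = 1), g k) = 0 := by
        apply Finset.sum_eq_zero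
        intro k hk
        rw [Finset.mem_filter] at hk
        rcases zmod2_cases (g k) with h | h
        · exact h
        · exact absurd h hk.2
      have h1 : (∑ k ∈ T, g k) = (T.card : ZMod 2) := by
        have hall : ∀ k ∈ T, g k = 1 := fun k hk => (Finset.mem_filter.mp hk).2
        rw [Finset.sum_congr rfl hall, Finset.sum_const, nsmul_eq_mul, mul_one]
      rw [h1, h2, add_zero]
    have hcard : 2 ∣ T.card := by
      have : ((T.card : ℕ) : ZMod 2) = 0 := by rw [← hsum]; exact hg'
      exact (ZMod.natCast_eq_zero_iff _ _).mp this
    obtain ⟨c, hc⟩ := hcard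
    set i0 : Fin n := ⟨0, hn⟩
    have hdecomp2 : g = ∑ k ∈ T, (ebv i0 + ebv k) := by
      rw [Finset.sum_add_distrib, Finset.sum_const, hc]
      have : (2 * c) • ebv i0 = 0 := by
        rw [mul_comm 2 c, ← smul_smul, two_smul, ebv_self_add i0, smul_zero]
      rw [this, zero_add]
      exact hdecomp
    rw [hdecomp2]
    exact AddSubgroup.sum_mem _ (fun k _ => mem_closure_pair hn R hRdef i0 k)

lemma card_ker (hn : 0 < n) : Nat.card ((sigmaHom n).ker) = 2 ^ (n - 1) := by
  have hsurj : Function.Surjective (sigmaHom n) := by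
    intro y
    rcases zmod2_cases y with rfl | rfl
    · exact ⟨0, map_zero _⟩
    · exact ⟨ebv ⟨0, hn⟩, sum_ebv _⟩
  have e2 := QuotientAddGroup.quotientKerEquivOfSurjective (sigmaHom n) hsurj
  have hq : Nat.card ((Fin n → ZMod 2) ⧸ (sigmaHom n).ker) = 2 := by
    rw [Nat.card_congr e2.toEquiv, Nat.card_zmod]
  have htot : Nat.card (Fin n → ZMod 2) = 2 ^ n := by
    simp [Nat.card_pi, Nat.card_zmod]
  have hmul := AddSubgroup.card_eq_card_quotient_mul_card_addSubgroup ((sigmaHom n).ker)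
  rw [htot, hq] at hmul
  have h2n : 2 ^ n = 2 * 2 ^ (n - 1) := by
    rw [← pow_succ']
    congr 1
    omega
  omega

end

section
variable {F : Type*} [Field F] {n : ℕ}

abbrev PairIdx (n : ℕ) := {p : Fin n × Fin n // p.1 < p.2}

instance : Fintype (PairIdx n) := by unfold PairIdx; infer_instance
instance : DecidableEq (PairIdx n) := by unfold PairIdx; infer_instance

def vS (F : Type*) [Field F] {n : ℕ} (p : PairIdx n) : Matrix (Fin n) (Fin n) F :=
  (2 : F) • (Matrix.single p.1.1 p.1.2 1 - Matrix.single p.1.2 p.1.1 1)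

lemma vS_entry (p : PairIdx n) (x y : Fin n) :
    vS F p x y = if p.1.1 = x ∧ p.1.2 = y then 2
      else if p.1.2 = x ∧ p.1.1 = y then -2 else 0 := by
  have hne : p.1.1 ≠ p.1.2 := p.2.ne
  simp only [vS, Matrix.smul_apply, Matrix.sub_apply, Matrix.single, Matrix.of_apply,
    smul_eq_mul]
  by_cases h1 : p.1.1 = x ∧ p.1.2 = y
  · have h2 : ¬(p.1.2 = x ∧ p.1.1 = y) := fun h2 => hne (h1.1.trans h2.1.symm)
    rw [if_pos h1, if_neg h2, if_pos h1]; ring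
  · by_cases h2 : p.1.2 = x ∧ p.1.1 = y
    · rw [if_neg h1, if_pos h2, if_neg h1, if_pos h2]; ring
    · rw [if_neg h1, if_neg h2, if_neg h1, if_neg h2]; ring

lemma transpose_std (a b : Fin n) :
    (Matrix.single a b (1:F))ᵀ = Matrix.single b a 1 := by
  ext x y
  simp only [Matrix.transpose_apply, Matrix.single, Matrix.of_apply]
  by_cases h1 : a = y <;> by_cases h2 : b = x <;> simp [h1, h2]

lemma vS_mem (p : PairIdx n) :
    vS F p ∈ skewAdjointMatricesLieSubalgebra (1 : Matrix (Fin n) (Fin n) F) := by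
  rw [mem_skewAdjointMatricesLieSubalgebra, mem_skewAdjointMatricesSubmodule]
  show (vS F p)ᵀ * 1 = 1 * (-(vS F p))
  rw [Matrix.mul_one, Matrix.one_mul, vS, Matrix.transpose_smul, Matrix.transpose_sub,
    transpose_std, transpose_std]
  rw [show (Matrix.single p.1.2 p.1.1 (1:F) - Matrix.single p.1.1 p.1.2 1) =
    -(Matrix.single p.1.1 p.1.2 (1:F) - Matrix.single p.1.2 p.1.1 1) from (neg_sub _ _).symm,
    smul_neg]

lemma skew_of_mem {A : Matrix (Fin n) (Fin n) F}
    (hA : A ∈ skewAdjointMatricesLieSubalgebra (1 : Matrix (Fin n) (Fin n) F)) :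
    Aᵀ = -A := by
  rw [mem_skewAdjointMatricesLieSubalgebra, mem_skewAdjointMatricesSubmodule] at hA
  have : Aᵀ * 1 = 1 * (-A) := hA
  rwa [Matrix.mul_one, Matrix.one_mul] at this

lemma sum_vS_entry (c : PairIdx n → F) (x y : Fin n) (hxy : x < y) :
    (∑ p, c p • vS F p) x y = 2 * c ⟨(x, y), hxy⟩ := by
  rw [Matrix.sum_apply]
  have hmain : (∑ p : PairIdx n, (c p • vS F p) x y) =
      (c ⟨(x, y), hxy⟩ • vS F ⟨(x, y), hxy⟩) x y := by
    apply Finset.sum_eq_single_of_mem _ (Finset.mem_univ _)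
    intro q _ hq
    rw [Matrix.smul_apply, vS_entry]
    have h1 : ¬ (q.1.1 = x ∧ q.1.2 = y) := by
      rintro ⟨hh1, hh2⟩
      exact hq (Subtype.ext (Prod.ext hh1 hh2))
    have h2 : ¬ (q.1.2 = x ∧ q.1.1 = y) := by
      rintro ⟨hh1, hh2⟩
      have hyx : y < x := by rw [← hh2, ← hh1]; exact q.2
      exact absurd hxy (lt_asymm hyx)
    rw [if_neg h1, if_neg h2, smul_zero]
  rw [hmain, Matrix.smul_apply, vS_entry (F := F) (⟨(x, y), hxy⟩ : PairIdx n), if_pos ⟨rfl, rfl⟩, smul_eq_mul]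
  ring

lemma sum_vS_entry' (c : PairIdx n → F) (x y : Fin n) (hyx : y < x) :
    (∑ p, c p • vS F p) x y = -2 * c ⟨(y, x), hyx⟩ := by
  rw [Matrix.sum_apply]
  have hmain : (∑ p : PairIdx n, (c p • vS F p) x y) =
      (c ⟨(y, x), hyx⟩ • vS F ⟨(y, x), hyx⟩) x y := by
    apply Finset.sum_eq_single_of_mem _ (Finset.mem_univ _)
    intro q _ hq
    rw [Matrix.smul_apply, vS_entry]
    have h1 : ¬ (q.1.1 = x ∧ q.1.2 = y) := by
      rintro ⟨hh1, hh2⟩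
      have : x < y := by rw [← hh1, ← hh2]; exact q.2
      exact absurd this (lt_asymm hyx)
    have h2 : ¬ (q.1.2 = x ∧ q.1.1 = y) := by
      rintro ⟨hh1, hh2⟩
      exact hq (Subtype.ext (Prod.ext hh2 hh1))
    rw [if_neg h1, if_neg h2, smul_zero]
  rw [hmain, Matrix.smul_apply, vS_entry (F := F) (⟨(y, x), hyx⟩ : PairIdx n)]
  have h1 : ¬ (y = x ∧ x = y) := fun ⟨hh, _⟩ => absurd hyx (hh ▸ lt_irrefl _)
  rw [if_neg h1, if_pos ⟨rfl, rfl⟩, smul_eq_mul]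
  ring

lemma vS_indep [CharZero F] : LinearIndependent F (vS F (n := n)) := by
  rw [Fintype.linearIndependent_iff]
  intro c hc q
  have h := congrFun (congrFun hc q.1.1) q.1.2
  rw [show ((0 : Matrix (Fin n) (Fin n) F) q.1.1 q.1.2) = 0 from rfl] at h
  rw [sum_vS_entry c q.1.1 q.1.2 q.2] at h
  have hc0 : c ⟨(q.1.1, q.1.2), q.2⟩ = 0 :=
    (mul_eq_zero.mp h).resolve_left (by norm_num)
  have : (⟨(q.1.1, q.1.2), q.2⟩ : PairIdx n) = q := rfl
  rwa [this] at hc0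

lemma vS_span [CharZero F] (x : Matrix (Fin n) (Fin n) F) :
    x ∈ Submodule.span F (Set.range (vS F (n := n))) ↔
      x ∈ skewAdjointMatricesLieSubalgebra (1 : Matrix (Fin n) (Fin n) F) := by
  constructor
  · intro hx
    refine Submodule.span_induction ?_ ?_ ?_ ?_ hx
    · rintro y ⟨p, rfl⟩
      exact vS_mem p
    · exact zero_mem _
    · intro a b _ _ ha hb; exact add_mem ha hb
    · intro a y _ hy; exact Submodule.smul_mem _ a hy
  · intro hx
    have hskew := skew_of_mem hx
    have hdiag : ∀ i : Fin n, x i i = 0 := by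
      intro i
      have h := congrFun (congrFun hskew i) i
      rw [Matrix.transpose_apply, Matrix.neg_apply] at h
      have h2x : (2 : F) * x i i = 0 := by linear_combination h
      exact (mul_eq_zero.mp h2x).resolve_left (by norm_num)
    have hxeq : x = ∑ p : PairIdx n, ((1/2 : F) * x p.1.1 p.1.2) • vS F p := by
      ext a b
      rcases lt_trichotomy a b with h | h | h
      · rw [sum_vS_entry (fun p => (1/2 : F) * x p.1.1 p.1.2) a b h]
        ring
      · subst h
        rw [Matrix.sum_apply, hdiag a]
        symm
        apply Finset.sum_eq_zero
        intro p _
        rw [Matrix.smul_apply, vS_entry]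
        have h1 : ¬ (p.1.1 = a ∧ p.1.2 = a) := by
          rintro ⟨hh1, hh2⟩
          exact p.2.ne (hh1.trans hh2.symm)
        have h2 : ¬ (p.1.2 = a ∧ p.1.1 = a) := by
          rintro ⟨hh1, hh2⟩
          exact p.2.ne (hh2.trans hh1.symm)
        rw [if_neg h1, if_neg h2, smul_zero]
      · rw [sum_vS_entry' (fun p => (1/2 : F) * x p.1.1 p.1.2) a b h]
        have hba := congrFun (congrFun hskew a) b
        rw [Matrix.transpose_apply, Matrix.neg_apply] at hba
        linear_combination hba
    rw [hxeq]
    exact Submodule.sum_mem _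
      (fun p _ => Submodule.smul_mem _ _ (Submodule.subset_span ⟨p, rfl⟩))

end

section
variable {n : ℕ}

lemma zmod2_add_self : ∀ x : ZMod 2, x + x = 0 := by decide

lemma two_torsion (v : Fin n → ZMod 2) : v + v = 0 :=
  funext fun k => zmod2_add_self (v k)

lemma cancel_mid (x m y : Fin n → ZMod 2) : (x + m) + (m + y) = x + y := by
  rw [add_assoc, ← add_assoc m m y, two_torsion m, zero_add]

lemma inter_pair_card_zero {i j s t : Fin n} (his : i ≠ s) (hit : i ≠ t)
    (hjs : j ≠ s) (hjt : j ≠ t) : ({i, j} ∩ {s, t} : Finset (Fin n)).card = 0 := by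
  rw [Finset.card_eq_zero]
  ext x
  simp only [Finset.mem_inter, Finset.mem_insert, Finset.mem_singleton,
    Finset.notMem_empty, iff_false]
  rintro ⟨rfl | rfl, h2⟩ <;> rcases h2 with rfl | rfl
  · exact his rfl
  · exact hit rfl
  · exact hjs rfl
  · exact hjt rfl

lemma inter_pair_card_two {i j s t : Fin n} (hij : i ≠ j) (hi : i = s ∨ i = t)
    (hj : j = s ∨ j = t) : ({i, j} ∩ {s, t} : Finset (Fin n)).card = 2 := by
  have heq : ({i, j} ∩ {s, t} : Finset (Fin n)) = {i, j} := by
    rw [Finset.inter_eq_left]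
    intro x hx
    rcases Finset.mem_insert.mp hx with rfl | hx
    · rcases hi with rfl | rfl <;> simp
    · rw [Finset.mem_singleton] at hx
      subst hx
      rcases hj with rfl | rfl <;> simp
  rw [heq, Finset.card_insert_of_notMem (by simpa using hij), Finset.card_singleton]

def submoduleToLie {F A : Type*} [CommRing F] [Ring A] [Algebra F A]
    (K : LieSubalgebra F A) (W : Submodule F A) (h : ∀ x, x ∈ W ↔ x ∈ K) :
    W ≃ₗ[F] K where
  toFun := fun x => ⟨x.1, (h x.1).mp x.2⟩
  invFun := fun x => ⟨x.1, (h x.1).mpr x.2⟩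
  map_add' := fun _ _ => rfl
  map_smul' := fun _ _ => rfl
  left_inv := fun _ => rfl
  right_inv := fun _ => rfl

@[simp] lemma submoduleToLie_apply {F A : Type*} [CommRing F] [Ring A] [Algebra F A]
    (K : LieSubalgebra F A) (W : Submodule F A) (h : ∀ x, x ∈ W ↔ x ∈ K) (x : W) :
    ((submoduleToLie K W h x : K) : A) = (x : A) := rfl

end

lemma lie_smul_mat {F : Type*} [Field F] {n : ℕ} (c : F) (X Y : Matrix (Fin n) (Fin n) F) :
    ⁅X, c • Y⁆ = c • ⁅X, Y⁆ := by
  rw [Ring.lie_def, Ring.lie_def, mul_smul_comm, smul_mul_assoc, smul_sub]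

lemma smul_lie_mat {F : Type*} [Field F] {n : ℕ} (c : F) (X Y : Matrix (Fin n) (Fin n) F) :
    ⁅c • X, Y⁆ = c • ⁅X, Y⁆ := by
  rw [Ring.lie_def, Ring.lie_def, mul_smul_comm, smul_mul_assoc, smul_sub]

lemma lie_neg_mat {F : Type*} [Field F] {n : ℕ} (X Y : Matrix (Fin n) (Fin n) F) :
    ⁅X, -Y⁆ = -⁅X, Y⁆ := by
  rw [Ring.lie_def, Ring.lie_def, mul_neg, neg_mul, neg_sub', sub_neg_eq_add, neg_add_eq_sub]

lemma neg_lie_mat {F : Type*} [Field F] {n : ℕ} (X Y : Matrix (Fin n) (Fin n) F) :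
    ⁅-X, Y⁆ = -⁅X, Y⁆ := by
  rw [Ring.lie_def, Ring.lie_def, mul_neg, neg_mul, neg_sub', sub_neg_eq_add, neg_add_eq_sub]

lemma lie_swap_mat {F : Type*} [Field F] {n : ℕ} (X Y : Matrix (Fin n) (Fin n) F) :
    ⁅X, Y⁆ = -⁅Y, X⁆ := by
  rw [Ring.lie_def, Ring.lie_def, neg_sub]

section CaseLemmas
variable {F : Type*} [Field F] {A : Type*} [Ring A] [Algebra F A] {n : ℕ}
variable (ξ : (Fin n → ZMod 2) → (Fin n → ZMod 2) → Fˣ)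
variable (u : (Fin n → ZMod 2) → A)

lemma unit_val_pow (k : ℕ) : (((-1 : Fˣ)^k : Fˣ) : F) = (-1 : F)^k := by
  rw [Units.val_pow_eq_pow_val]
  norm_num

section
variable (hξ : ∀ a b, ξ a b =
      (-1 : Fˣ) ^ (∑ i : Fin n, ∑ j : Fin n, if j < i then (a i).val * (b j).val else 0))
  (hbrk : ∀ a b, ⁅u a, u b⁆ = (((ξ a b : Fˣ) : F) - ((ξ b a : Fˣ) : F)) • u (a + b))
include hξ hbrk

lemma ubr1 {i j t : Fin n} (hij : i < j) (hjt : j < t) :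
    ⁅u (ebv i + ebv j), u (ebv j + ebv t)⁆ = (2 : F) • u (ebv i + ebv t) := by
  rw [hbrk, cancel_mid, xi_val ξ hξ hij.ne hjt.ne, xi_val ξ hξ hjt.ne hij.ne]
  rw [if_neg (lt_asymm hij), if_neg (lt_asymm (hij.trans hjt)), if_neg (lt_irrefl j),
    if_neg (lt_asymm hjt), if_pos hij, if_pos (hij.trans hjt), if_pos hjt]
  rw [unit_val_pow, unit_val_pow]
  norm_num

lemma ubr2a {i j s : Fin n} (hij : i < j) (hsj : s < j) (his : i < s) :
    ⁅u (ebv i + ebv j), u (ebv s + ebv j)⁆ = (-2 : F) • u (ebv i + ebv s) := by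
  rw [hbrk,
    show (ebv i + ebv j) + (ebv s + ebv j) = ebv i + ebv s from by
      rw [add_comm (ebv s) (ebv j)]; exact cancel_mid _ _ _,
    xi_val ξ hξ hij.ne hsj.ne, xi_val ξ hξ hsj.ne hij.ne]
  rw [if_neg (lt_asymm his), if_neg (lt_asymm hij), if_pos hsj, if_neg (lt_irrefl j),
    if_pos his, if_neg (lt_asymm hsj), if_pos hij]
  rw [unit_val_pow, unit_val_pow]
  norm_num

lemma ubr2b {i j s : Fin n} (hij : i < j) (hsj : s < j) (hsi : s < i) :
    ⁅u (ebv i + ebv j), u (ebv s + ebv j)⁆ = (2 : F) • u (ebv s + ebv i) := by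
  rw [hbrk,
    show (ebv i + ebv j) + (ebv s + ebv j) = ebv s + ebv i from by
      rw [add_comm (ebv s) (ebv j), cancel_mid, add_comm (ebv i) (ebv s)],
    xi_val ξ hξ hij.ne hsj.ne, xi_val ξ hξ hsj.ne hij.ne]
  rw [if_pos hsi, if_neg (lt_asymm hij), if_pos hsj, if_neg (lt_irrefl j),
    if_neg (lt_asymm hsi), if_neg (lt_asymm hsj), if_pos hij]
  rw [unit_val_pow, unit_val_pow]
  norm_num

lemma ubr3a {i j t : Fin n} (hij : i < j) (hit : i < t) (hjt : j < t) :
    ⁅u (ebv i + ebv j), u (ebv i + ebv t)⁆ = (-2 : F) • u (ebv j + ebv t) := by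
  rw [hbrk,
    show (ebv i + ebv j) + (ebv i + ebv t) = ebv j + ebv t from by
      rw [add_comm (ebv i) (ebv j)]; exact cancel_mid _ _ _,
    xi_val ξ hξ hij.ne hit.ne, xi_val ξ hξ hit.ne hij.ne]
  rw [if_neg (lt_irrefl i), if_neg (lt_asymm hit), if_pos hij, if_neg (lt_asymm hjt),
    if_neg (lt_asymm hij), if_pos hit, if_pos hjt]
  rw [unit_val_pow, unit_val_pow]
  norm_num

lemma ubr3b {i j t : Fin n} (hij : i < j) (hit : i < t) (htj : t < j) :
    ⁅u (ebv i + ebv j), u (ebv i + ebv t)⁆ = (2 : F) • u (ebv t + ebv j) := by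
  rw [hbrk,
    show (ebv i + ebv j) + (ebv i + ebv t) = ebv t + ebv j from by
      rw [add_comm (ebv i) (ebv j), cancel_mid, add_comm (ebv j) (ebv t)],
    xi_val ξ hξ hij.ne hit.ne, xi_val ξ hξ hit.ne hij.ne]
  rw [if_neg (lt_irrefl i), if_neg (lt_asymm hit), if_pos hij, if_pos htj,
    if_neg (lt_asymm hij), if_pos hit, if_neg (lt_asymm htj)]
  rw [unit_val_pow, unit_val_pow]
  norm_num

lemma ubr4 {i j s : Fin n} (hij : i < j) (hsi : s < i) :
    ⁅u (ebv i + ebv j), u (ebv s + ebv i)⁆ = (-2 : F) • u (ebv s + ebv j) := by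
  rw [hbrk,
    show (ebv i + ebv j) + (ebv s + ebv i) = ebv s + ebv j from by
      rw [add_comm (ebv i) (ebv j), add_comm (ebv s) (ebv i), cancel_mid,
        add_comm (ebv j) (ebv s)],
    xi_val ξ hξ hij.ne hsi.ne, xi_val ξ hξ hsi.ne hij.ne]
  rw [if_pos hsi, if_neg (lt_irrefl i), if_pos (hsi.trans hij), if_pos hij,
    if_neg (lt_asymm hsi), if_neg (lt_asymm (hsi.trans hij)), if_neg (lt_asymm hij)]
  rw [unit_val_pow, unit_val_pow]
  norm_num

lemma ubr5 {i j s t : Fin n} (hij : i < j) (hst : s < t)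
    (his : i ≠ s) (hit : i ≠ t) (hjs : j ≠ s) (hjt : j ≠ t) :
    ⁅u (ebv i + ebv j), u (ebv s + ebv t)⁆ = 0 := by
  rw [hbrk, xi_val ξ hξ hij.ne hst.ne, xi_val ξ hξ hst.ne hij.ne]
  have e1 : ((if s < i then 1 else 0) + (if i < s then 1 else 0) : ℕ) = 1 := by
    rcases his.lt_or_gt with h | h
    · rw [if_neg (lt_asymm h), if_pos h]
    · rw [if_pos h, if_neg (lt_asymm h)]
  have e2 : ((if t < i then 1 else 0) + (if i < t then 1 else 0) : ℕ) = 1 := by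
    rcases hit.lt_or_gt with h | h
    · rw [if_neg (lt_asymm h), if_pos h]
    · rw [if_pos h, if_neg (lt_asymm h)]
  have e3 : ((if s < j then 1 else 0) + (if j < s then 1 else 0) : ℕ) = 1 := by
    rcases hjs.lt_or_gt with h | h
    · rw [if_neg (lt_asymm h), if_pos h]
    · rw [if_pos h, if_neg (lt_asymm h)]
  have e4 : ((if t < j then 1 else 0) + (if j < t then 1 else 0) : ℕ) = 1 := by
    rcases hjt.lt_or_gt with h | h
    · rw [if_neg (lt_asymm h), if_pos h]
    · rw [if_pos h, if_neg (lt_asymm h)]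
  have hpar : ((-1 : Fˣ)) ^ (((if s < i then 1 else 0) + (if t < i then 1 else 0)) +
        ((if s < j then 1 else 0) + (if t < j then 1 else 0)) : ℕ) =
      ((-1 : Fˣ)) ^ (((if i < s then 1 else 0) + (if j < s then 1 else 0)) +
        ((if i < t then 1 else 0) + (if j < t then 1 else 0)) : ℕ) :=
    pow_neg_one_parity (by omega)
  rw [hpar, sub_self, zero_smul]

end

lemma vSbr1 {i j t : Fin n} (hij : i < j) (hjt : j < t) (hit : i < t) :
    ⁅vS F (⟨(i, j), hij⟩ : PairIdx n), vS F (⟨(j, t), hjt⟩ : PairIdx n)⁆ =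
      (2 : F) • vS F (⟨(i, t), hit⟩ : PairIdx n) := by
  show ⁅(2 : F) • (Matrix.single i j 1 - Matrix.single j i 1),
      (2 : F) • (Matrix.single j t 1 - Matrix.single t j 1)⁆ =
    (2 : F) • ((2 : F) • (Matrix.single i t 1 - Matrix.single t i 1))
  rw [smul_lie_mat, lie_smul_mat, lie_std_mid i j t hij.ne hjt.ne hit.ne]

lemma vSbr2a {i j s : Fin n} (hij : i < j) (hsj : s < j) (his : i < s) :
    ⁅vS F (⟨(i, j), hij⟩ : PairIdx n), vS F (⟨(s, j), hsj⟩ : PairIdx n)⁆ =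
      (-2 : F) • vS F (⟨(i, s), his⟩ : PairIdx n) := by
  show ⁅(2 : F) • (Matrix.single i j 1 - Matrix.single j i 1),
      (2 : F) • (Matrix.single s j 1 - Matrix.single j s 1)⁆ =
    (-2 : F) • ((2 : F) • (Matrix.single i s 1 - Matrix.single s i 1))
  rw [show (Matrix.single s j (1 : F) - Matrix.single j s 1) =
    -(Matrix.single j s (1 : F) - Matrix.single s j 1) from (neg_sub _ _).symm]
  rw [smul_neg, lie_neg_mat, smul_lie_mat, lie_smul_mat,
    lie_std_mid i j s hij.ne hsj.ne' his.ne, neg_smul]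

lemma vSbr2b {i j s : Fin n} (hij : i < j) (hsj : s < j) (hsi : s < i) :
    ⁅vS F (⟨(i, j), hij⟩ : PairIdx n), vS F (⟨(s, j), hsj⟩ : PairIdx n)⁆ =
      (2 : F) • vS F (⟨(s, i), hsi⟩ : PairIdx n) := by
  show ⁅(2 : F) • (Matrix.single i j 1 - Matrix.single j i 1),
      (2 : F) • (Matrix.single s j 1 - Matrix.single j s 1)⁆ =
    (2 : F) • ((2 : F) • (Matrix.single s i 1 - Matrix.single i s 1))
  rw [show (Matrix.single s j (1 : F) - Matrix.single j s 1) =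
    -(Matrix.single j s (1 : F) - Matrix.single s j 1) from (neg_sub _ _).symm]
  rw [smul_neg, lie_neg_mat, smul_lie_mat, lie_smul_mat,
    lie_std_mid i j s hij.ne hsj.ne' hsi.ne']
  rw [show (Matrix.single s i (1 : F) - Matrix.single i s 1) =
    -(Matrix.single i s (1 : F) - Matrix.single s i 1) from (neg_sub _ _).symm]
  rw [smul_neg, smul_neg]

lemma vSbr3a {i j t : Fin n} (hij : i < j) (hit : i < t) (hjt : j < t) :
    ⁅vS F (⟨(i, j), hij⟩ : PairIdx n), vS F (⟨(i, t), hit⟩ : PairIdx n)⁆ =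
      (-2 : F) • vS F (⟨(j, t), hjt⟩ : PairIdx n) := by
  show ⁅(2 : F) • (Matrix.single i j 1 - Matrix.single j i 1),
      (2 : F) • (Matrix.single i t 1 - Matrix.single t i 1)⁆ =
    (-2 : F) • ((2 : F) • (Matrix.single j t 1 - Matrix.single t j 1))
  rw [show (Matrix.single i j (1 : F) - Matrix.single j i 1) =
    -(Matrix.single j i (1 : F) - Matrix.single i j 1) from (neg_sub _ _).symm]
  rw [smul_neg, neg_lie_mat, smul_lie_mat, lie_smul_mat,
    lie_std_mid j i t hij.ne' hit.ne hjt.ne, neg_smul]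

lemma vSbr3b {i j t : Fin n} (hij : i < j) (hit : i < t) (htj : t < j) :
    ⁅vS F (⟨(i, j), hij⟩ : PairIdx n), vS F (⟨(i, t), hit⟩ : PairIdx n)⁆ =
      (2 : F) • vS F (⟨(t, j), htj⟩ : PairIdx n) := by
  show ⁅(2 : F) • (Matrix.single i j 1 - Matrix.single j i 1),
      (2 : F) • (Matrix.single i t 1 - Matrix.single t i 1)⁆ =
    (2 : F) • ((2 : F) • (Matrix.single t j 1 - Matrix.single j t 1))
  rw [show (Matrix.single i j (1 : F) - Matrix.single j i 1) =
    -(Matrix.single j i (1 : F) - Matrix.single i j 1) from (neg_sub _ _).symm]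
  rw [smul_neg, neg_lie_mat, smul_lie_mat, lie_smul_mat,
    lie_std_mid j i t hij.ne' hit.ne htj.ne']
  rw [show (Matrix.single t j (1 : F) - Matrix.single j t 1) =
    -(Matrix.single j t (1 : F) - Matrix.single t j 1) from (neg_sub _ _).symm]
  rw [smul_neg, smul_neg]

lemma vSbr4 {i j s : Fin n} (hij : i < j) (hsi : s < i) (hsj : s < j) :
    ⁅vS F (⟨(i, j), hij⟩ : PairIdx n), vS F (⟨(s, i), hsi⟩ : PairIdx n)⁆ =
      (-2 : F) • vS F (⟨(s, j), hsj⟩ : PairIdx n) := by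
  show ⁅(2 : F) • (Matrix.single i j 1 - Matrix.single j i 1),
      (2 : F) • (Matrix.single s i 1 - Matrix.single i s 1)⁆ =
    (-2 : F) • ((2 : F) • (Matrix.single s j 1 - Matrix.single j s 1))
  rw [lie_swap_mat, smul_lie_mat, lie_smul_mat,
    lie_std_mid s i j hsi.ne hij.ne hsj.ne, neg_smul]

lemma vSbr5 {i j s t : Fin n} (hij : i < j) (hst : s < t)
    (his : i ≠ s) (hit : i ≠ t) (hjs : j ≠ s) (hjt : j ≠ t) :
    ⁅vS F (⟨(i, j), hij⟩ : PairIdx n), vS F (⟨(s, t), hst⟩ : PairIdx n)⁆ = 0 := by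
  show ⁅(2 : F) • (Matrix.single i j 1 - Matrix.single j i 1),
      (2 : F) • (Matrix.single s t 1 - Matrix.single t s 1)⁆ = 0
  rw [smul_lie_mat, lie_smul_mat, lie_std_disj i j s t his hit hjs hjt, smul_zero, smul_zero]

end CaseLemmas

/-- `R` is a skew root system of Lie type in `(G, β)` (relative to the subgroup
generated by `R`, nothing outside it matters for the axioms below). -/
def IsSkewRootLie {G : Type*} [AddCommGroup G] {F : Type*} [Field F]
    (β : G → G → Fˣ) (R : Set G) : Prop :=
  (∀ a ∈ R, ∃ h : G, β a h ≠ 1) ∧ AddSubgroup.closure R = ⊤ ∧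
  (∀ a ∈ R, -a ∈ R) ∧ ∀ a ∈ R, ∀ b ∈ R, β a b ≠ 1 → a + b ∈ R

set_option maxHeartbeats 2000000 in
/-- Let `G = ℤ₂ⁿ` (`n ≥ 3`) with `β(eᵢ,eⱼ) = -1` for `i ≠ j` and `1` for `i = j`.
Then `R⁻ = {eᵢ + eⱼ : i < j}` is a skew root system of Lie type in `(G₁, β|_{G₁})`, where
`G₁ ≅ ℤ₂^{n-1}` is the subgroup generated by `R⁻` (of cardinality `2^{n-1}`).  Moreover
`β(eᵢ+eⱼ, eₛ+eₜ) = -1` iff `|{i,j} ∩ {s,t}| = 1`, the graph of `R⁻` is connected (so `R⁻`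
is indecomposable), and the Lie algebra `L(R⁻)` (inside the twisted group algebra, i.e.
the Clifford algebra) is isomorphic to `so_n(F)`, the Lie algebra of skew-symmetric
`n × n` matrices. -/
theorem skewRootLie_so_n
    {F : Type*} [Field F] [IsAlgClosed F] [CharZero F]
    {A : Type*} [Ring A] [Algebra F A]
    (n : ℕ) (hn : 3 ≤ n)
    (β : (Fin n → ZMod 2) → (Fin n → ZMod 2) → Fˣ)
    (hβ : ∀ a b, β a b =
      (-1 : Fˣ) ^ (((∑ i, a i) * (∑ i, b i) - ∑ i, a i * b i : ZMod 2)).val)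
    (ξ : (Fin n → ZMod 2) → (Fin n → ZMod 2) → Fˣ)
    (hξ : ∀ a b, ξ a b =
      (-1 : Fˣ) ^ (∑ i : Fin n, ∑ j : Fin n, if j < i then (a i).val * (b j).val else 0))
    (u : (Fin n → ZMod 2) → A)
    (hind : LinearIndependent F u) (hone : u 0 = 1)
    (hmul : ∀ a b, u a * u b = (ξ a b : F) • u (a + b))
    (R : Set (Fin n → ZMod 2))
    (hRdefR : R = {g | ∃ i j : Fin n, i < j ∧
        g = Pi.single i (1 : ZMod 2) + Pi.single j (1 : ZMod 2)})
    (L : LieSubalgebra F A)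
    (hL : (L : Submodule F A) = Submodule.span F (u '' R)) :
    (∀ i j s t : Fin n, i ≠ j → s ≠ t →
      (β (Pi.single i 1 + Pi.single j 1) (Pi.single s 1 + Pi.single t 1) = -1 ↔
        (({i, j} ∩ {s, t} : Finset (Fin n)).card = 1))) ∧
    ((∀ a ∈ R, ∃ b ∈ R, β a b ≠ 1) ∧ (∀ a ∈ R, -a ∈ R) ∧
      (∀ a ∈ R, ∀ b ∈ R, β a b ≠ 1 → a + b ∈ R)) ∧
    (∀ a ∈ R, ∀ b ∈ R, Relation.ReflTransGen
        (fun x y => x ∈ R ∧ y ∈ R ∧ β x y ≠ 1) a b) ∧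
    Nat.card (AddSubgroup.closure R) = 2 ^ (n - 1) ∧
    Nonempty (↥L ≃ₗ⁅F⁆
      ↥(skewAdjointMatricesLieSubalgebra (1 : Matrix (Fin n) (Fin n) F))) := by
  have hR' : R = {g | ∃ i j : Fin n, i < j ∧ g = ebv i + ebv j} := hRdefR
  have hmemR : ∀ {i j : Fin n}, i < j → (ebv i + ebv j) ∈ R := by
    intro i j h
    rw [hR']
    exact ⟨i, j, h, rfl⟩
  have hmemR' : ∀ {i j : Fin n}, i ≠ j → (ebv i + ebv j) ∈ R := by
    intro i j h
    rcases h.lt_or_gt with h | h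
    · exact hmemR h
    · rw [add_comm]; exact hmemR h
  have hRelt : ∀ a ∈ R, ∃ i j : Fin n, i < j ∧ a = ebv i + ebv j := by
    intro a ha
    rw [hR'] at ha
    exact ha
  refine ⟨?_, ⟨?_, ?_, ?_⟩, ?_, ?_, ?_⟩
  -- Part 1 : β iff card inter = 1
  · intro i j s t hij hst
    exact beta_eq_neg_one_iff β hβ hij hst
  -- Part 2a
  · intro a ha
    obtain ⟨i, j, hij, rfl⟩ := hRelt a ha
    have hex : ∃ k : Fin n, k ≠ i ∧ k ≠ j := by
      by_contra hcon
      push_neg at hcon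
      have hsub : (Finset.univ : Finset (Fin n)) ⊆ {i, j} := by
        intro k _
        rcases eq_or_ne k i with rfl | h
        · simp
        · simp [hcon k h]
      have hcard := Finset.card_le_card hsub
      rw [Finset.card_univ, Fintype.card_fin] at hcard
      have : ({i, j} : Finset (Fin n)).card ≤ 2 :=
        (Finset.card_insert_le _ _).trans (by simp)
      omega
    obtain ⟨k, hki, hkj⟩ := hex
    have hcard1 : ({i, j} ∩ {i, k} : Finset (Fin n)).card = 1 :=
      inter_pair_one_left (Or.inl rfl) hij.ne' hkj.symm
    refine ⟨ebv i + ebv k, hmemR' hki.symm, ?_⟩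
    exact (beta_ne_one_iff β hβ hij.ne hki.symm).mpr hcard1
  -- Part 2b
  · intro a ha
    obtain ⟨i, j, hij, rfl⟩ := hRelt a ha
    have : -(ebv i + ebv j) = ebv i + ebv j :=
      neg_eq_of_add_eq_zero_left (two_torsion _)
    rw [this]
    exact ha
  -- Part 2c
  · intro a ha b hb hne
    obtain ⟨i, j, hij, rfl⟩ := hRelt a ha
    obtain ⟨s, t, hst, rfl⟩ := hRelt b hb
    have hcard1 := (beta_ne_one_iff β hβ hij.ne hst.ne).mp hne
    by_cases his : i = s
    · subst his
      have hjt : j ≠ t := by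
        rintro rfl
        rw [inter_pair_card_two hij.ne (Or.inl rfl) (Or.inr rfl)] at hcard1
        omega
      rw [show (ebv i + ebv j) + (ebv i + ebv t) = ebv j + ebv t from by
        rw [add_comm (ebv i) (ebv j)]; exact cancel_mid _ _ _]
      exact hmemR' hjt
    · by_cases hit : i = t
      · subst hit
        rw [show (ebv i + ebv j) + (ebv s + ebv i) = ebv s + ebv j from by
          rw [add_comm (ebv i) (ebv j), add_comm (ebv s) (ebv i), cancel_mid,
            add_comm (ebv j) (ebv s)]]
        have hjs : s ≠ j := (hst.trans hij).ne
        exact hmemR' hjs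
      · by_cases hjs : j = s
        · subst hjs
          rw [cancel_mid]
          exact hmemR' (hij.trans hst).ne
        · by_cases hjt : j = t
          · subst hjt
            rw [show (ebv i + ebv j) + (ebv s + ebv j) = ebv i + ebv s from by
              rw [add_comm (ebv s) (ebv j), cancel_mid]]
            exact hmemR' (fun h => his h)
          · rw [inter_pair_card_zero his hit hjs hjt] at hcard1
            omega
  -- Part 3 : connectivity
  · intro a ha b hb
    obtain ⟨i, j, hij, rfl⟩ := hRelt a ha
    obtain ⟨s, t, hst, rfl⟩ := hRelt b hb
    have hstep : ∀ i' j' s' t' : Fin n, i' ≠ j' → s' ≠ t' →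
        ({i', j'} ∩ {s', t'} : Finset (Fin n)).card = 1 →
        (fun x y => x ∈ R ∧ y ∈ R ∧ β x y ≠ 1) (ebv i' + ebv j') (ebv s' + ebv t') := by
      intro i' j' s' t' h1 h2 hc
      exact ⟨hmemR' h1, hmemR' h2, (beta_ne_one_iff β hβ h1 h2).mpr hc⟩
    by_cases his : i = s
    · subst his
      by_cases hjt : j = t
      · subst hjt; exact Relation.ReflTransGen.refl
      · exact Relation.ReflTransGen.single
          (hstep i j i t hij.ne hst.ne (inter_pair_one_left (Or.inl rfl) hij.ne' hjt))
    · by_cases hit : i = t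
      · subst hit
        have hjs : j ≠ s := (hst.trans hij).ne'
        exact Relation.ReflTransGen.single
          (hstep i j s i hij.ne hst.ne (inter_pair_one_left (Or.inr rfl) hjs hij.ne'))
      · by_cases hjs : j = s
        · subst hjs
          exact Relation.ReflTransGen.single
            (hstep i j j t hij.ne hst.ne (inter_pair_one_right (Or.inl rfl) his hit))
        · by_cases hjt : j = t
          · subst hjt
            exact Relation.ReflTransGen.single
              (hstep i j s j hij.ne hst.ne (inter_pair_one_right (Or.inr rfl) his hit))
          · -- disjoint: go through (i, s)
            refine Relation.ReflTransGen.head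
              (hstep i j i s hij.ne his ?_) (Relation.ReflTransGen.single
                (hstep i s s t his hst.ne ?_))
            · exact inter_pair_one_left (Or.inl rfl) hij.ne' hjs
            · exact inter_pair_one_right (Or.inl rfl) his hit
  -- Part 4 : cardinality
  · have hn0 : 0 < n := by omega
    rw [hR', closure_eq_ker hn0 _ rfl, card_ker hn0]
  -- Part 5 : Lie algebra isomorphism
  · let r : PairIdx n → (Fin n → ZMod 2) := fun p => ebv p.1.1 + ebv p.1.2
    have hrinj : Function.Injective r := by
      intro p q h
      obtain ⟨h1, h2⟩ := pair_eq p.2 q.2 h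
      exact Subtype.ext (Prod.ext h1 h2)
    let vL : PairIdx n → A := fun p => u (r p)
    have hvLind : LinearIndependent F vL := hind.comp r hrinj
    have hrangeL : Submodule.span F (Set.range vL) = (L : Submodule F A) := by
      rw [hL]
      congr 1
      rw [hR']
      ext x
      constructor
      · rintro ⟨p, rfl⟩
        exact ⟨r p, ⟨p.1.1, p.1.2, p.2, rfl⟩, rfl⟩
      · rintro ⟨g, ⟨i, j, hij, rfl⟩, rfl⟩
        exact ⟨⟨(i, j), hij⟩, rfl⟩
    have hLsets : ∀ x : A, x ∈ Submodule.span F (Set.range vL) ↔ x ∈ L := by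
      intro x
      rw [hrangeL]
      exact LieSubalgebra.mem_toSubmodule (L' := L)
    let bL : Module.Basis (PairIdx n) F ↥L :=
      (Module.Basis.span hvLind).map (submoduleToLie L _ hLsets)
    have hbL : ∀ p, (bL p : A) = vL p := by
      intro p
      show ((submoduleToLie L _ hLsets ((Module.Basis.span hvLind) p) : ↥L) : A) = vL p
      rw [submoduleToLie_apply, Module.Basis.span_apply]
    let bS : Module.Basis (PairIdx n) F
        ↥(skewAdjointMatricesLieSubalgebra (1 : Matrix (Fin n) (Fin n) F)) :=
      (Module.Basis.span (vS_indep (F := F) (n := n))).map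
        (submoduleToLie _ _ (fun x => vS_span x))
    have hbS : ∀ p, (bS p : Matrix (Fin n) (Fin n) F) = vS F p := by
      intro p
      show ((submoduleToLie _ _ (fun x => vS_span x) ((Module.Basis.span (vS_indep (F := F))) p) :
        ↥(skewAdjointMatricesLieSubalgebra (1 : Matrix (Fin n) (Fin n) F))) :
          Matrix (Fin n) (Fin n) F) = vS F p
      rw [submoduleToLie_apply, Module.Basis.span_apply]
    let φ := bL.equiv bS (Equiv.refl _)
    have hφ : ∀ p, φ (bL p) = bS p := fun p => bL.equiv_apply p bS (Equiv.refl _)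
    have hbrk : ∀ a b, ⁅u a, u b⁆ =
        (((ξ a b : Fˣ) : F) - ((ξ b a : Fˣ) : F)) • u (a + b) := by
      intro a b
      rw [Ring.lie_def, hmul, hmul, add_comm b a, sub_smul]
    have hcase : ∀ (p q p'' : PairIdx n) (c : F),
        (⁅(bL p : A), (bL q : A)⁆ = c • (bL p'' : A)) →
        (⁅(bS p : Matrix (Fin n) (Fin n) F), (bS q : Matrix (Fin n) (Fin n) F)⁆ =
          c • (bS p'' : Matrix (Fin n) (Fin n) F)) →
        φ ⁅bL p, bL q⁆ = ⁅bS p, bS q⁆ := by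
      intro p q p'' c h1 h2
      have hLeq : ⁅bL p, bL q⁆ = c • bL p'' := by
        apply Subtype.ext
        rw [LieSubalgebra.coe_bracket]
        rw [h1]
        rfl
      rw [hLeq]
      rw [LinearEquiv.map_smul]
      rw [hφ p'']
      apply Subtype.ext
      rw [LieSubalgebra.coe_bracket]
      rw [h2]
      rfl
    have hcase0 : ∀ (p q : PairIdx n),
        (⁅(bL p : A), (bL q : A)⁆ = 0) →
        (⁅(bS p : Matrix (Fin n) (Fin n) F), (bS q : Matrix (Fin n) (Fin n) F)⁆ = 0) →
        φ ⁅bL p, bL q⁆ = ⁅bS p, bS q⁆ := by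
      intro p q h1 h2
      have hLeq : ⁅bL p, bL q⁆ = 0 := by
        apply Subtype.ext
        rw [LieSubalgebra.coe_bracket, h1]
        rfl
      rw [hLeq, map_zero]
      symm
      apply Subtype.ext
      rw [LieSubalgebra.coe_bracket, h2]
      rfl
    have hkey : ∀ p q, φ ⁅bL p, bL q⁆ = ⁅bS p, bS q⁆ := by
      rintro ⟨⟨i, j⟩, hij⟩ ⟨⟨s, t⟩, hst⟩
      by_cases his : i = s
      · subst his
        by_cases hjt : j = t
        · subst hjt
          have hq : (⟨(i, j), hst⟩ : PairIdx n) = ⟨(i, j), hij⟩ := rfl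
          rw [hq, lie_self, lie_self, map_zero]
        · rcases Ne.lt_or_gt hjt with hlt | hlt
          · exact hcase _ _ ⟨(j, t), hlt⟩ (-2 : F)
              (by simp only [hbL]; exact ubr3a ξ u hξ hbrk hij hst hlt)
              (by simp only [hbS]; exact vSbr3a hij hst hlt)
          · exact hcase _ _ ⟨(t, j), hlt⟩ (2 : F)
              (by simp only [hbL]; exact ubr3b ξ u hξ hbrk hij hst hlt)
              (by simp only [hbS]; exact vSbr3b hij hst hlt)
      · by_cases hit : i = t
        · subst hit
          exact hcase _ _ ⟨(s, j), hst.trans hij⟩ (-2 : F)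
            (by simp only [hbL]; exact ubr4 ξ u hξ hbrk hij hst)
            (by simp only [hbS]; exact vSbr4 hij hst (hst.trans hij))
        · by_cases hjs : j = s
          · subst hjs
            exact hcase _ _ ⟨(i, t), hij.trans hst⟩ (2 : F)
              (by simp only [hbL]; exact ubr1 ξ u hξ hbrk hij hst)
              (by simp only [hbS]; exact vSbr1 hij hst (hij.trans hst))
          · by_cases hjt : j = t
            · subst hjt
              rcases Ne.lt_or_gt his with hlt | hlt
              · exact hcase _ _ ⟨(i, s), hlt⟩ (-2 : F)
                  (by simp only [hbL]; exact ubr2a ξ u hξ hbrk hij hst hlt)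
                  (by simp only [hbS]; exact vSbr2a hij hst hlt)
              · exact hcase _ _ ⟨(s, i), hlt⟩ (2 : F)
                  (by simp only [hbL]; exact ubr2b ξ u hξ hbrk hij hst hlt)
                  (by simp only [hbS]; exact vSbr2b hij hst hlt)
            · exact hcase0 _ _
                (by simp only [hbL]; exact ubr5 ξ u hξ hbrk hij hst his hit hjs hjt)
                (by simp only [hbS]; exact vSbr5 hij hst his hit hjs hjt)
    have hlie : ∀ x y : ↥L, φ ⁅x, y⁆ = ⁅φ x, φ y⁆ := by
      let SO := ↥(skewAdjointMatricesLieSubalgebra (1 : Matrix (Fin n) (Fin n) F))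
      let B1 : ↥L →ₗ[F] ↥L →ₗ[F] SO :=
        (LinearMap.llcomp F ↥L ↥L SO φ.toLinearMap).comp (LieAlgebra.ad F ↥L).toLinearMap
      let B2 : ↥L →ₗ[F] ↥L →ₗ[F] SO :=
        (((LieAlgebra.ad F SO).toLinearMap).comp φ.toLinearMap).compl₂ φ.toLinearMap
      have hB : B1 = B2 := by
        apply bL.ext
        intro p
        apply bL.ext
        intro q
        show φ ⁅bL p, bL q⁆ = ⁅φ (bL p), φ (bL q)⁆
        rw [hφ p, hφ q]
        exact hkey p q
      intro x y
      have := LinearMap.congr_fun (LinearMap.congr_fun hB x) y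
      exact this
    have hml : ∀ {x y : ↥L}, φ.toLinearMap ⁅x, y⁆ = ⁅φ.toLinearMap x, φ.toLinearMap y⁆ :=
      fun {x y} => hlie x y
    exact ⟨LieEquiv.mk ⟨φ.toLinearMap, hml⟩ (fun z => φ.symm z) φ.left_inv φ.right_inv⟩
end

section
/- Let q: F_2^{2k} → F_2 be a quadratic form with polarization β_1(a,b) = q(a+b) − q(a) − q(b), and set β(a,b) = (−1)^{β_1(a,b)} valued in F^×, where G = Z_2^{2k} is identified with F_2^{2k}. (1) If R = {a ∈ G : q(a) = 0} generates G, then R is a skew root system of Jordan type in (G,β). (2) If β is nonsingular and R' = {a ∈ G ∖ {0} : q(a) = 1} generates G, then R' is a skew root system of Lie type in (G,β). -/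
/-- `R` is a skew root system of Jordan type in `(G, β)`. -/
def IsSkewRootJordan {G : Type*} [AddCommGroup G] {F : Type*} [Field F]
    (β : G → G → Fˣ) (R : Set G) : Prop :=
  AddSubgroup.closure R = ⊤ ∧ (∀ a ∈ R, -a ∈ R) ∧
  ∀ a ∈ R, ∀ b ∈ R, β a b ≠ -1 → a + b ∈ R

/-- Let `q : 𝔽₂^{2k} → 𝔽₂` be a quadratic form with polarization
`β₁(a,b) = q(a+b) - q(a) - q(b)` (a bilinear form), and `β(a,b) = (-1)^{β₁(a,b)}` valued
in `Fˣ`, where `G = ℤ₂^{2k}` is identified with `𝔽₂^{2k}`.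
(1) If `R = {a : q a = 0}` generates `G`, then `R` is a skew root system of Jordan type
in `(G,β)`.
(2) If `β` is nonsingular and `R' = {a ≠ 0 : q a = 1}` generates `G`, then `R'` is a skew
root system of Lie type in `(G,β)`. -/
theorem quadratic_form_skew_root_systems
    {F : Type*} [Field F] [IsAlgClosed F] [CharZero F]
    (k : ℕ)
    (q : (Fin (2 * k) → ZMod 2) → ZMod 2)
    (β₁ : (Fin (2 * k) → ZMod 2) → (Fin (2 * k) → ZMod 2) → ZMod 2)
    (hβ₁ : ∀ a b, β₁ a b = q (a + b) - q a - q b)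
    (hbil : (∀ a b c, β₁ (a + b) c = β₁ a c + β₁ b c) ∧
            (∀ a b c, β₁ a (b + c) = β₁ a b + β₁ a c))
    (β : (Fin (2 * k) → ZMod 2) → (Fin (2 * k) → ZMod 2) → Fˣ)
    (hβ : ∀ a b, β a b = (-1 : Fˣ) ^ (β₁ a b).val) :
    (AddSubgroup.closure {a | q a = 0} = ⊤ →
      IsSkewRootJordan β {a | q a = 0}) ∧
    ((∀ g, (∀ h, β g h = 1) → g = 0) →
      AddSubgroup.closure {a | a ≠ 0 ∧ q a = 1} = ⊤ →
      IsSkewRootLie β {a | a ≠ 0 ∧ q a = 1}) := by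
  have h01 : ∀ x : ZMod 2, x = 0 ∨ x = 1 := by decide
  have hneg : ∀ a : Fin (2 * k) → ZMod 2, -a = a := by
    intro a; funext i
    have : ∀ x : ZMod 2, -x = x := by decide
    simp [this]
  have hq0 : q 0 = 0 := by
    have h1 : β₁ 0 0 = 0 := by
      have h := hbil.1 0 0 0
      rw [add_zero] at h
      have h2 : β₁ 0 0 + β₁ 0 0 = 0 := by
        have : ∀ x : ZMod 2, x + x = 0 := by decide
        exact this _
      exact h.trans h2
    have h2 := hβ₁ 0 0
    rw [add_zero, h1] at h2
    have : ∀ x : ZMod 2, 0 = x - x - x → x = 0 := by decide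
    exact this _ h2
  have hkey : ∀ a b, q (a + b) = q a + q b + β₁ a b := by
    intro a b; linear_combination -hβ₁ a b
  have hne1 : (-1 : Fˣ) ≠ 1 := by
    intro h
    have : ((-1 : Fˣ) : F) = ((1 : Fˣ) : F) := by rw [h]
    simp only [Units.val_neg, Units.val_one] at this
    norm_num at this
  have hval0 : ((0 : ZMod 2)).val = 0 := rfl
  have hval1 : ((1 : ZMod 2)).val = 1 := rfl
  -- β a b ≠ -1 → β₁ a b = 0
  have hnn1 : ∀ a b, β a b ≠ -1 → β₁ a b = 0 := by
    intro a b h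
    rcases h01 (β₁ a b) with h0 | h1
    · exact h0
    · exfalso; apply h; rw [hβ, h1, hval1, pow_one]
  -- β a b ≠ 1 → β₁ a b = 1
  have hn1 : ∀ a b, β a b ≠ 1 → β₁ a b = 1 := by
    intro a b h
    rcases h01 (β₁ a b) with h0 | h1
    · exfalso; apply h; rw [hβ, h0, hval0, pow_zero]
    · exact h1
  constructor
  · intro hcl
    refine ⟨hcl, ?_, ?_⟩
    · intro a ha; rw [hneg]; exact ha
    · intro a ha b hb hne
      have h0 := hnn1 a b hne
      show q (a + b) = 0
      rw [hkey, ha, hb, h0, add_zero, add_zero]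
  · intro hns hcl
    refine ⟨?_, hcl, ?_, ?_⟩
    · intro a ha
      by_contra hc
      push_neg at hc
      exact ha.1 (hns a hc)
    · intro a ha; rw [hneg]; exact ha
    · intro a ha b hb hne
      have h1 := hn1 a b hne
      have hq : q (a + b) = 1 := by
        rw [hkey, ha.2, hb.2, h1]; decide
      constructor
      · intro h0
        rw [h0, hq0] at hq
        exact absurd hq (by decide)
      · exact hq
end
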